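/- If 0 < τr i < τc i for all i, then the direct-ROI loss L attains a unique global minimum on ℝ^N, namely at the point s* defined by s* i = Real.log (τr i / (τc i − τr i)) (equivalently σ(s* i) = τr i / τc i); that is, L(s*) ≤ L(s) for all s, with equality only when s = s*. -/

import Mathlib

/-- The sigmoid function. -/
noncomputable def sigm (t : ℝ) : ℝ := 1 / (1 + Real.exp (-t))

lemma roi_term_eq (r c t : ℝ) :
    r * Real.log (sigm t / (1 - sigm t)) + c * Real.log (1 - sigm t)
      = -(c * Real.log (1 + Real.exp t) - r * t) := by
  have h0 : 0 < 1 + Real.exp (-t) := by positivity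
  have he : Real.exp t ≠ 0 := Real.exp_ne_zero t
  have h1 : 1 - sigm t = 1 / (1 + Real.exp t) := by
    unfold sigm
    rw [Real.exp_neg]
    field_simp
    ring
  have h2 : sigm t / (1 - sigm t) = Real.exp t := by
    rw [h1]
    unfold sigm
    rw [Real.exp_neg]
    have h3 : 0 < 1 + Real.exp t := by positivity
    field_simp
    ring
  rw [h2, h1, Real.log_exp, one_div, Real.log_inv]
  ring

lemma roi_strict_min (r c : ℝ) (hr : 0 < r) (hrc : r < c) (t : ℝ)
    (ht : t ≠ Real.log (r / (c - r))) :
    c * Real.log (1 + Real.exp (Real.log (r / (c - r)))) - r * Real.log (r / (c - r))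
      < c * Real.log (1 + Real.exp t) - r * t := by
  have hcr : 0 < c - r := sub_pos.2 hrc
  set t₀ := Real.log (r / (c - r)) with ht₀
  set g : ℝ → ℝ := fun x => c * Real.log (1 + Real.exp x) - r * x with hg
  have hderiv : ∀ x, HasDerivAt g (c * Real.exp x / (1 + Real.exp x) - r) x := by
    intro x
    have h1 : HasDerivAt (fun y : ℝ => 1 + Real.exp y) (Real.exp x) x := by
      simpa using (Real.hasDerivAt_exp x).const_add 1
    have hne : (1 : ℝ) + Real.exp x ≠ 0 := by positivity
    have h2 := (h1.log hne).const_mul c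
    have h3 : HasDerivAt (fun y : ℝ => r * y) r x := by
      simpa using (hasDerivAt_id x).const_mul r
    have := h2.sub h3
    exact this.congr_deriv (by ring)
  have hdiff : Differentiable ℝ g := fun x => (hderiv x).differentiableAt
  have hexp0 : Real.exp t₀ = r / (c - r) := Real.exp_log (div_pos hr hcr)
  have hsign : ∀ x, t₀ < x → 0 < c * Real.exp x / (1 + Real.exp x) - r := by
    intro x hx
    have h1 : r / (c - r) < Real.exp x := by rw [← hexp0]; exact Real.exp_lt_exp.2 hx
    have h2 : r < Real.exp x * (c - r) := (div_lt_iff₀ hcr).1 h1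
    have h3 : 0 < 1 + Real.exp x := by positivity
    rw [sub_pos, lt_div_iff₀ h3]
    nlinarith [Real.exp_pos x]
  have hsign' : ∀ x, x < t₀ → c * Real.exp x / (1 + Real.exp x) - r < 0 := by
    intro x hx
    have h1 : Real.exp x < r / (c - r) := by rw [← hexp0]; exact Real.exp_lt_exp.2 hx
    have h2 : Real.exp x * (c - r) < r := (lt_div_iff₀ hcr).1 h1
    have h3 : 0 < 1 + Real.exp x := by positivity
    rw [sub_neg, div_lt_iff₀ h3]
    nlinarith [Real.exp_pos x]
  rcases lt_or_gt_of_ne ht with h | h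
  · have hanti : StrictAntiOn g (Set.Iic t₀) := by
      apply strictAntiOn_of_deriv_neg (convex_Iic t₀) hdiff.continuous.continuousOn
      intro x hx
      rw [interior_Iic] at hx
      rw [(hderiv x).deriv]
      exact hsign' x hx
    exact hanti (le_of_lt h) Set.self_mem_Iic h
  · have hmono : StrictMonoOn g (Set.Ici t₀) := by
      apply strictMonoOn_of_deriv_pos (convex_Ici t₀) hdiff.continuous.continuousOn
      intro x hx
      rw [interior_Ici] at hx
      rw [(hderiv x).deriv]
      exact hsign x hx
    exact hmono Set.self_mem_Ici (le_of_lt h) h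

/-- if `0 < τr i < τc i` for all `i`, the direct-ROI loss attains
a unique global minimum at `s* i = log (τr i / (τc i - τr i))`. -/
theorem direct_roi_unique_global_min
    (N : ℕ) (hN : 0 < N) (τr τc : Fin N → ℝ)
    (L : (Fin N → ℝ) → ℝ)
    (hL : L = fun u : Fin N → ℝ => -(1 / (N : ℝ)) *
      ∑ i, (τr i * Real.log (sigm (u i) / (1 - sigm (u i)))
        + τc i * Real.log (1 - sigm (u i))))
    (hτ : ∀ i, 0 < τr i ∧ τr i < τc i)
    (sstar : Fin N → ℝ)
    (hsstar : sstar = fun i => Real.log (τr i / (τc i - τr i))) :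
    (∀ s : Fin N → ℝ, L sstar ≤ L s)
      ∧ (∀ s : Fin N → ℝ, L s = L sstar → s = sstar) := by
  have hNpos : (0 : ℝ) < (N : ℝ) := by exact_mod_cast hN
  -- rewrite L in the convenient form
  have hLeq : ∀ u : Fin N → ℝ,
      L u = (1 / (N : ℝ)) * ∑ i, (τc i * Real.log (1 + Real.exp (u i)) - τr i * u i) := by
    intro u
    rw [hL]
    simp only [roi_term_eq]
    rw [Finset.sum_neg_distrib]
    ring
  -- each coordinate of sstar strictly minimizes its term
  have hstrict : ∀ (s : Fin N → ℝ) (i : Fin N), s i ≠ sstar i →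
      τc i * Real.log (1 + Real.exp (sstar i)) - τr i * sstar i
        < τc i * Real.log (1 + Real.exp (s i)) - τr i * s i := by
    intro s i hne
    have h := roi_strict_min (τr i) (τc i) (hτ i).1 (hτ i).2 (s i) (by rw [hsstar] at hne; simpa using hne)
    rw [hsstar]
    simpa using h
  have hle : ∀ (s : Fin N → ℝ) (i : Fin N),
      τc i * Real.log (1 + Real.exp (sstar i)) - τr i * sstar i
        ≤ τc i * Real.log (1 + Real.exp (s i)) - τr i * s i := by
    intro s i
    by_cases h : s i = sstar i
    · rw [h]
    · exact le_of_lt (hstrict s i h)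
  constructor
  · intro s
    rw [hLeq s, hLeq sstar]
    apply mul_le_mul_of_nonneg_left _ (by positivity)
    exact Finset.sum_le_sum fun i _ => hle s i
  · intro s hLs
    rw [hLeq s, hLeq sstar] at hLs
    have hsum : ∑ i, ((τc i * Real.log (1 + Real.exp (s i)) - τr i * s i)
        - (τc i * Real.log (1 + Real.exp (sstar i)) - τr i * sstar i)) = 0 := by
      rw [Finset.sum_sub_distrib]
      have h1 : (1 / (N : ℝ)) ≠ 0 := by positivity
      have := mul_left_cancel₀ h1 hLs
      linarith
    have hall := (Finset.sum_eq_zero_iff_of_nonneg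
      (fun i _ => sub_nonneg.2 (hle s i))).1 hsum
    funext i
    by_contra hne
    have := hstrict s i hne
    have h0 := hall i (Finset.mem_univ i)
    linarith [sub_nonneg.2 (hle s i), this]
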